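/- Let R be a nontrivial commutative ring and let M be an R-module admitting two finite free resolutions 0 → F_n → ⋯ → F_0 → M → 0 and 0 → G_m → ⋯ → G_0 → M → 0 by finitely generated free modules of ranks r_i and s_j respectively. Then the alternating sums agree: Σ_{i=0}^{n} (−1)^i r_i = Σ_{j=0}^{m} (−1)^j s_j. -/
import Mathlib


open Module LinearMap

universe u v

section LiftMap
variable {R : Type u} [CommRing R]

noncomputable def liftMap {P A B : Type*} [AddCommGroup P] [Module R P] [Module.Projective R P]
    [AddCommGroup A] [Module R A] [AddCommGroup B] [Module R B]
    (f : A →ₗ[R] B) (g : P →ₗ[R] B) (h : ∀ x, g x ∈ LinearMap.range f) : P →ₗ[R] A :=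
  (Module.projective_lifting_property f.rangeRestrict
    (g.codRestrict (LinearMap.range f) h) f.surjective_rangeRestrict).choose

lemma liftMap_spec {P A B : Type*} [AddCommGroup P] [Module R P] [Module.Projective R P]
    [AddCommGroup A] [Module R A] [AddCommGroup B] [Module R B]
    (f : A →ₗ[R] B) (g : P →ₗ[R] B) (h : ∀ x, g x ∈ LinearMap.range f) :
    f ∘ₗ liftMap f g h = g := by
  have hs := (Module.projective_lifting_property f.rangeRestrict
    (g.codRestrict (LinearMap.range f) h) f.surjective_rangeRestrict).choose_spec
  ext x
  exact congrArg Subtype.val (DFunLike.congr_fun hs x)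

end LiftMap

section SCplx
variable {R : Type u} [CommRing R] (C : ℕ → Type v)
  [∀ i, AddCommGroup (C i)] [∀ i, Module R (C i)]

def SCplx : ℕ → Type v
  | 0 => C 1
  | 1 => C 2 × C 0
  | (l+2) => C (l+3)

instance SCplx.acg : ∀ i, AddCommGroup (SCplx C i)
  | 0 => inferInstanceAs (AddCommGroup (C 1))
  | 1 => inferInstanceAs (AddCommGroup (C 2 × C 0))
  | (l+2) => inferInstanceAs (AddCommGroup (C (l+3)))

instance SCplx.mod : ∀ i, Module R (SCplx C i)
  | 0 => inferInstanceAs (Module R (C 1))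
  | 1 => inferInstanceAs (Module R (C 2 × C 0))
  | (l+2) => inferInstanceAs (Module R (C (l+3)))

instance SCplx.free [∀ i, Module.Free R (C i)] : ∀ i, Module.Free R (SCplx C i)
  | 0 => inferInstanceAs (Module.Free R (C 1))
  | 1 => inferInstanceAs (Module.Free R (C 2 × C 0))
  | (l+2) => inferInstanceAs (Module.Free R (C (l+3)))

instance SCplx.fin [∀ i, Module.Finite R (C i)] : ∀ i, Module.Finite R (SCplx C i)
  | 0 => inferInstanceAs (Module.Finite R (C 1))
  | 1 => inferInstanceAs (Module.Finite R (C 2 × C 0))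
  | (l+2) => inferInstanceAs (Module.Finite R (C (l+3)))

def SCplxD (D : ∀ i, C (i+1) →ₗ[R] C i) (sec : C 0 →ₗ[R] C 1) :
    ∀ i, SCplx C (i+1) →ₗ[R] SCplx C i
  | 0 => LinearMap.coprod (D 1) sec
  | 1 => (D 2).prod 0
  | (l+2) => D (l+3)

end SCplx

theorem chi_zero {R : Type u} [CommRing R] [Nontrivial R] (N : ℕ) :
    ∀ (C : ℕ → Type v) [∀ i, AddCommGroup (C i)] [∀ i, Module R (C i)]
      [∀ i, Module.Free R (C i)] [∀ i, Module.Finite R (C i)]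
      (D : ∀ i, C (i + 1) →ₗ[R] C i),
      (∀ i, N < i → Subsingleton (C i)) →
      Function.Surjective (D 0) →
      (∀ i, Function.Exact (D (i + 1)) (D i)) →
      ∑ i ∈ Finset.range (N + 1), (-1 : ℤ) ^ i * Module.finrank R (C i) = 0 := by
  induction N with
  | zero =>
    intro C _ _ _ _ D hsub hsurj hexact
    have h1 : Subsingleton (C 1) := hsub 1 (by omega)
    have h0 : Subsingleton (C 0) := by
      constructor
      intro a b
      obtain ⟨x, rfl⟩ := hsurj a
      obtain ⟨y, rfl⟩ := hsurj b
      rw [Subsingleton.elim x y]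
    simp [Module.finrank_zero_of_subsingleton]
  | succ K IH =>
    intro C acg mods free fin D hsub hsurj hexact
    obtain ⟨sec, hsec⟩ := Module.projective_lifting_property (D 0) LinearMap.id hsurj
    have hsecx : ∀ c, D 0 (sec c) = c := fun c => by
      simpa using DFunLike.congr_fun hsec c
    cases K with
    | zero =>
      have h2 : Subsingleton (C 2) := hsub 2 (by omega)
      have hinj : Function.Injective (D 0) := by
        intro a b hab
        have hz : D 0 (a - b) = 0 := by rw [map_sub, hab, sub_self]
        obtain ⟨w, hw⟩ := (hexact 0 _).mp hz
        rw [Subsingleton.elim w 0, map_zero] at hw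
        have := hw.symm
        rwa [sub_eq_zero] at this
      have hfr : Module.finrank R (C 1) = Module.finrank R (C 0) :=
        (LinearEquiv.ofBijective (D 0) ⟨hinj, hsurj⟩).finrank_eq
      rw [Finset.sum_range_succ, Finset.sum_range_one, hfr]
      ring
    | succ L =>
      -- hypotheses for the shrunk complex
      have hsub' : ∀ i, L + 1 < i → Subsingleton (SCplx C i) := by
        intro i hi
        rcases i with _ | _ | j
        · omega
        · omega
        · exact hsub (j+3) (by omega)
      have hsurj' : Function.Surjective (SCplxD C D sec 0) := by
        show Function.Surjective (LinearMap.coprod (D 1) sec)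
        intro y
        obtain ⟨x, hx⟩ := (hexact 0 (y - sec (D 0 y))).mp
          (by rw [map_sub, hsecx, sub_self])
        refine ⟨(x, D 0 y), ?_⟩
        show D 1 x + sec (D 0 y) = y
        rw [hx, sub_add_cancel]
      have hexact' : ∀ i, Function.Exact (SCplxD C D sec (i+1)) (SCplxD C D sec i) := by
        intro i
        rcases i with _ | _ | j
        · show Function.Exact ((D 2).prod 0) (LinearMap.coprod (D 1) sec)
          intro z
          constructor
          · intro hz
            obtain ⟨x, c⟩ := z
            have hz' : D 1 x + sec c = 0 := hz
            have hc : c = 0 := by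
              have h3 : D 0 (D 1 x) + D 0 (sec c) = 0 := by
                rw [← map_add, hz', map_zero]
              rwa [(hexact 0).apply_apply_eq_zero, hsecx, zero_add] at h3
            have hx0 : D 1 x = 0 := by rwa [hc, map_zero, add_zero] at hz'
            obtain ⟨w, hw⟩ := (hexact 1 x).mp hx0
            refine ⟨w, ?_⟩
            show (D 2 w, (0 : C 0)) = (x, c)
            rw [hw, hc]
          · rintro ⟨w, rfl⟩
            show D 1 (D 2 w) + sec 0 = 0
            rw [(hexact 1).apply_apply_eq_zero, map_zero, add_zero]
        · show Function.Exact (D 3) ((D 2).prod (0 : C 3 →ₗ[R] C 0))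
          intro x
          constructor
          · intro hx
            have h4 : D 2 x = 0 := congrArg Prod.fst hx
            exact (hexact 2 x).mp h4
          · rintro ⟨w, rfl⟩
            have h4 : D 2 (D 3 w) = 0 := (hexact 2).apply_apply_eq_zero w
            show (D 2 (D 3 w), (0:C 0)) = 0
            rw [h4]
            rfl
        · exact hexact (j+3)
      have HH := IH (SCplx C) (SCplxD C D sec) hsub' hsurj' hexact'
      rw [Finset.sum_range_succ', Finset.sum_range_succ'] at HH
      rw [Finset.sum_range_succ', Finset.sum_range_succ', Finset.sum_range_succ']
      have HH' : ∑ i ∈ Finset.range L,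
            (-1:ℤ)^(i+1+1) * (Module.finrank R (C (i+1+1+1)) : ℤ)
          + (-1:ℤ)^(0+1) * (Module.finrank R (C 2 × C 0) : ℤ)
          + (-1:ℤ)^0 * (Module.finrank R (C 1) : ℤ) = 0 := HH
      rw [Module.finrank_prod] at HH'
      push_cast at HH'
      have hAB : ∑ i ∈ Finset.range L,
            (-1:ℤ)^(i+1+1) * (Module.finrank R (C (i+1+1+1)) : ℤ)
          + ∑ i ∈ Finset.range L,
            (-1:ℤ)^(i+1+1+1) * (Module.finrank R (C (i+1+1+1)) : ℤ) = 0 := by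
        rw [← Finset.sum_add_distrib]
        apply Finset.sum_eq_zero
        intro i _
        ring
      linear_combination hAB - HH'
section Phi
variable {R : Type u} [CommRing R] {M : Type v} [AddCommGroup M] [Module R M]
variable (r s : ℕ → ℕ)
  (d : ∀ i, (Fin (r (i + 1)) → R) →ₗ[R] (Fin (r i) → R))
  (ε : (Fin (r 0) → R) →ₗ[R] M)
  (e : ∀ j, (Fin (s (j + 1)) → R) →ₗ[R] (Fin (s j) → R))
  (η : (Fin (s 0) → R) →ₗ[R] M)

def PhiProp : ∀ i, (((Fin (r i) → R) →ₗ[R] (Fin (s i) → R))) → Prop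
  | 0, f => η ∘ₗ f = ε
  | (_+1), _ => True

def PhiSig (i : ℕ) : Type u :=
  Σ' (f : (Fin (r i) → R) →ₗ[R] (Fin (s i) → R))
     (g : (Fin (r (i+1)) → R) →ₗ[R] (Fin (s (i+1)) → R)),
   PhiProp r s ε η i f ∧ (e i) ∘ₗ g = f ∘ₗ (d i)

lemma phi_land (hd : ∀ i, Function.Exact (d (i + 1)) (d i))
    (he : ∀ j, Function.Exact (e (j + 1)) (e j))
    (i : ℕ) (p : PhiSig r s d ε e η i) :
    ∀ x, (p.2.1 ∘ₗ d (i+1)) x ∈ LinearMap.range (e (i+1)) := by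
  intro x
  have h2 : e i (p.2.1 (d (i+1) x)) = 0 := by
    have h3 := DFunLike.congr_fun p.2.2.2 (d (i+1) x)
    simp only [LinearMap.comp_apply] at h3
    rw [h3, (hd i).apply_apply_eq_zero x, map_zero]
  obtain ⟨y, hy⟩ := (he i _).mp h2
  exact LinearMap.mem_range.mpr ⟨y, hy⟩

noncomputable def phiAux (hε : Function.Exact (d 0) ε)
    (hd : ∀ i, Function.Exact (d (i + 1)) (d i))
    (hηsurj : Function.Surjective η) (hη : Function.Exact (e 0) η)
    (he : ∀ j, Function.Exact (e (j + 1)) (e j)) :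
    ∀ i, PhiSig r s d ε e η i
  | 0 => by
    have h0 : ∀ x, ε x ∈ LinearMap.range η := fun x => by
      rw [LinearMap.range_eq_top.mpr hηsurj]; exact Submodule.mem_top
    refine ⟨liftMap η ε h0, liftMap (e 0) (liftMap η ε h0 ∘ₗ d 0) ?_, ?_, liftMap_spec _ _ _⟩
    · intro x
      have h1 := DFunLike.congr_fun (liftMap_spec η ε h0) (d 0 x)
      simp only [LinearMap.comp_apply] at h1
      have h2 : η ((liftMap η ε h0) (d 0 x)) = 0 := by
        rw [h1]; exact hε.apply_apply_eq_zero x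
      obtain ⟨y, hy⟩ := (hη _).mp h2
      exact LinearMap.mem_range.mpr ⟨y, hy⟩
    · exact liftMap_spec η ε h0
  | (i+1) =>
    ⟨(phiAux hε hd hηsurj hη he i).2.1,
     liftMap (e (i+1)) ((phiAux hε hd hηsurj hη he i).2.1 ∘ₗ d (i+1))
       (phi_land r s d ε e η hd he i (phiAux hε hd hηsurj hη he i)),
     trivial, liftMap_spec _ _ _⟩

variable (hε : Function.Exact (d 0) ε)
    (hd : ∀ i, Function.Exact (d (i + 1)) (d i))
    (hηsurj : Function.Surjective η) (hη : Function.Exact (e 0) η)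
    (he : ∀ j, Function.Exact (e (j + 1)) (e j))

noncomputable def phiF (i : ℕ) : (Fin (r i) → R) →ₗ[R] (Fin (s i) → R) :=
  (phiAux r s d ε e η hε hd hηsurj hη he i).1

lemma phiF_base : η ∘ₗ phiF r s d ε e η hε hd hηsurj hη he 0 = ε :=
  (phiAux r s d ε e η hε hd hηsurj hη he 0).2.2.1

lemma phiF_succ (i : ℕ) : phiF r s d ε e η hε hd hηsurj hη he (i+1)
    = (phiAux r s d ε e η hε hd hηsurj hη he i).2.1 := rfl

lemma phiF_sq (i : ℕ) :
    e i ∘ₗ phiF r s d ε e η hε hd hηsurj hη he (i+1)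
      = phiF r s d ε e η hε hd hηsurj hη he i ∘ₗ d i := by
  rw [phiF_succ]
  exact (phiAux r s d ε e η hε hd hηsurj hη he i).2.2.2

end Phi
section Cone
variable (R : Type u) [CommRing R] (r s : ℕ → ℕ)

def ConeC : ℕ → Type u
  | 0 => Fin (s 0) → R
  | (k+1) => (Fin (r k) → R) × (Fin (s (k+1)) → R)

instance ConeC.acg : ∀ k, AddCommGroup (ConeC R r s k)
  | 0 => inferInstanceAs (AddCommGroup (Fin (s 0) → R))
  | (k+1) => inferInstanceAs (AddCommGroup ((Fin (r k) → R) × (Fin (s (k+1)) → R)))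

instance ConeC.mod : ∀ k, Module R (ConeC R r s k)
  | 0 => inferInstanceAs (Module R (Fin (s 0) → R))
  | (k+1) => inferInstanceAs (Module R ((Fin (r k) → R) × (Fin (s (k+1)) → R)))

instance ConeC.free : ∀ k, Module.Free R (ConeC R r s k)
  | 0 => inferInstanceAs (Module.Free R (Fin (s 0) → R))
  | (k+1) => inferInstanceAs (Module.Free R ((Fin (r k) → R) × (Fin (s (k+1)) → R)))

instance ConeC.fin : ∀ k, Module.Finite R (ConeC R r s k)
  | 0 => inferInstanceAs (Module.Finite R (Fin (s 0) → R))
  | (k+1) => inferInstanceAs (Module.Finite R ((Fin (r k) → R) × (Fin (s (k+1)) → R)))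

variable {R r s}

def coneD (d : ∀ i, (Fin (r (i + 1)) → R) →ₗ[R] (Fin (r i) → R))
    (e : ∀ j, (Fin (s (j + 1)) → R) →ₗ[R] (Fin (s j) → R))
    (φ : ∀ i, (Fin (r i) → R) →ₗ[R] (Fin (s i) → R)) :
    ∀ k, ConeC R r s (k+1) →ₗ[R] ConeC R r s k
  | 0 => LinearMap.coprod (φ 0) (e 0)
  | (k+1) => ((-(d k)) ∘ₗ (LinearMap.fst R _ _)).prod (LinearMap.coprod (φ (k+1)) (e (k+1)))

end Cone

/-- Two finite free resolutions `0 → F_n → ⋯ → F_0 → M → 0` (with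
`F i = R^{r i}`) and `0 → G_m → ⋯ → G_0 → M → 0` (with `G j = R^{s j}`) of the
same module `M` over a nontrivial commutative ring have equal alternating rank
sums. We set `r i = 0` for `i > n` (resp. `s j = 0` for `j > m`), so the free
modules above the top degree are trivial and exactness everywhere encodes the
finite resolution. -/
theorem stmt_5 {R : Type*} [CommRing R] [Nontrivial R]
    {M : Type*} [AddCommGroup M] [Module R M]
    (n m : ℕ) (r s : ℕ → ℕ)
    (hr : ∀ i, n < i → r i = 0) (hs : ∀ j, m < j → s j = 0)
    (d : ∀ i, (Fin (r (i + 1)) → R) →ₗ[R] (Fin (r i) → R))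
    (ε : (Fin (r 0) → R) →ₗ[R] M)
    (hεsurj : Function.Surjective ε)
    (hε : Function.Exact (d 0) ε)
    (hd : ∀ i, Function.Exact (d (i + 1)) (d i))
    (e : ∀ j, (Fin (s (j + 1)) → R) →ₗ[R] (Fin (s j) → R))
    (η : (Fin (s 0) → R) →ₗ[R] M)
    (hηsurj : Function.Surjective η)
    (hη : Function.Exact (e 0) η)
    (he : ∀ j, Function.Exact (e (j + 1)) (e j)) :
    ∑ i ∈ Finset.range (n + 1), (-1 : ℤ) ^ i * r i =
      ∑ j ∈ Finset.range (m + 1), (-1 : ℤ) ^ j * s j := by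
  classical
  set φ := phiF r s d ε e η hε hd hηsurj hη he with hφ
  have hbase : ∀ x, η (φ 0 x) = ε x := fun x =>
    DFunLike.congr_fun (phiF_base r s d ε e η hε hd hηsurj hη he) x
  have hsq : ∀ i x, e i (φ (i+1) x) = φ i (d i x) := fun i x => by
    have := DFunLike.congr_fun (phiF_sq r s d ε e η hε hd hηsurj hη he i) x
    simpa using this
  -- subsingleton above the top
  have hsub : ∀ i, n + m + 1 < i → Subsingleton (ConeC R r s i) := by
    intro i hi
    rcases i with _ | k
    · omega
    · have h1 : r k = 0 := hr k (by omega)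
      have h2 : s (k+1) = 0 := hs (k+1) (by omega)
      have s1 : Subsingleton (Fin (r k) → R) := by rw [h1]; infer_instance
      have s2 : Subsingleton (Fin (s (k+1)) → R) := by rw [h2]; infer_instance
      show Subsingleton ((Fin (r k) → R) × (Fin (s (k+1)) → R))
      infer_instance
  -- surjectivity at the bottom
  have hsurjC : Function.Surjective (coneD d e φ 0) := by
    show Function.Surjective (LinearMap.coprod (φ 0) (e 0))
    intro g
    obtain ⟨x, hx⟩ := hεsurj (η g)
    have h1 : η (g - φ 0 x) = 0 := by rw [map_sub, hbase x, hx, sub_self]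
    obtain ⟨y, hy⟩ := (hη _).mp h1
    refine ⟨(x, y), ?_⟩
    show φ 0 x + e 0 y = g
    rw [hy]
    abel
  -- exactness
  have hexactC : ∀ k, Function.Exact (coneD d e φ (k+1)) (coneD d e φ k) := by
    intro k
    rcases k with _ | k
    · intro z
      constructor
      · intro hz
        obtain ⟨x, y⟩ := z
        have hz' : φ 0 x + e 0 y = 0 := hz
        have hεx : ε x = 0 := by
          have h3 : η (φ 0 x + e 0 y) = 0 := by rw [hz', map_zero]
          rwa [map_add, hbase x, hη.apply_apply_eq_zero y, add_zero] at h3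
        obtain ⟨x', hx'⟩ := (hε x).mp hεx
        have h5 : e 0 (φ 1 x' + y) = 0 := by
          rw [map_add, hsq 0 x', hx', hz']
        obtain ⟨y', hy'⟩ := (he 0 _).mp h5
        refine ⟨(-x', y'), ?_⟩
        show (-(d 0 (-x')), φ 1 (-x') + e 1 y') = (x, y)
        rw [map_neg, neg_neg, hx', map_neg, hy', Prod.mk.injEq]
        exact ⟨rfl, by abel⟩
      · rintro ⟨⟨u, v⟩, rfl⟩
        show φ 0 (-(d 0 u)) + e 0 (φ 1 u + e 1 v) = 0
        rw [map_neg, map_add, hsq 0 u, (he 0).apply_apply_eq_zero v, add_zero,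
          neg_add_cancel]
    · intro z
      constructor
      · intro hz
        obtain ⟨x, y⟩ := z
        have h1 : -(d k x) = 0 := congrArg Prod.fst hz
        have h1' : d k x = 0 := by rwa [neg_eq_zero] at h1
        have h2 : φ (k+1) x + e (k+1) y = 0 := congrArg Prod.snd hz
        obtain ⟨x', hx'⟩ := (hd k x).mp h1'
        have h5 : e (k+1) (φ (k+2) x' + y) = 0 := by
          rw [map_add, hsq (k+1) x', hx', h2]
        obtain ⟨y', hy'⟩ := (he (k+1) _).mp h5
        refine ⟨(-x', y'), ?_⟩
        show (-(d (k+1) (-x')), φ (k+2) (-x') + e (k+2) y') = (x, y)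
        rw [map_neg, neg_neg, hx', map_neg, hy', Prod.mk.injEq]
        exact ⟨rfl, by abel⟩
      · rintro ⟨⟨u, v⟩, rfl⟩
        show (-(d k (-(d (k+1) u))), φ (k+1) (-(d (k+1) u)) + e (k+1) (φ (k+2) u + e (k+2) v))
          = 0
        rw [map_neg, (hd k).apply_apply_eq_zero u, neg_zero, map_neg, map_add,
          hsq (k+1) u, (he (k+1)).apply_apply_eq_zero v, add_zero, neg_add_cancel]
        simp
  have HZ := chi_zero (n + m + 1) (ConeC R r s) (coneD d e φ) hsub hsurjC hexactC
  -- rank computations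
  have f0 : Module.finrank R (ConeC R r s 0) = s 0 := Module.finrank_fin_fun R
  have fS : ∀ k, Module.finrank R (ConeC R r s (k+1)) = r k + s (k+1) := by
    intro k
    have h : Module.finrank R ((Fin (r k) → R) × (Fin (s (k+1)) → R)) = r k + s (k+1) := by
      rw [Module.finrank_prod, Module.finrank_fin_fun, Module.finrank_fin_fun]
    exact h
  rw [Finset.sum_range_succ'] at HZ
  have hsum : ∑ k ∈ Finset.range (n + m + 1),
        (-1:ℤ)^(k+1) * (Module.finrank R (ConeC R r s (k+1)) : ℤ)
      = (- ∑ k ∈ Finset.range (n + m + 1), (-1:ℤ)^k * (r k : ℤ))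
        + ∑ k ∈ Finset.range (n + m + 1), (-1:ℤ)^(k+1) * (s (k+1) : ℤ) := by
    rw [← Finset.sum_neg_distrib, ← Finset.sum_add_distrib]
    refine Finset.sum_congr rfl fun k _ => ?_
    rw [fS k]
    push_cast
    ring
  have hs2 : ∑ k ∈ Finset.range (n + m + 1), (-1:ℤ)^(k+1) * (s (k+1) : ℤ)
      + (-1:ℤ)^0 * (s 0 : ℤ)
      = ∑ j ∈ Finset.range (n + m + 2), (-1:ℤ)^j * (s j : ℤ) :=
    (Finset.sum_range_succ' (fun j => (-1:ℤ)^j * (s j : ℤ)) (n + m + 1)).symm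
  rw [hsum, f0] at HZ
  -- truncations
  have tr : ∑ k ∈ Finset.range (n + 1), (-1:ℤ)^k * (r k : ℤ)
      = ∑ k ∈ Finset.range (n + m + 1), (-1:ℤ)^k * (r k : ℤ) := by
    refine Finset.sum_subset (Finset.range_subset_range.mpr (by omega)) ?_
    intro x _ hx
    have hx' : n < x := by simpa using hx
    rw [hr x hx']
    simp
  have ts : ∑ j ∈ Finset.range (m + 1), (-1:ℤ)^j * (s j : ℤ)
      = ∑ j ∈ Finset.range (n + m + 2), (-1:ℤ)^j * (s j : ℤ) := by
    refine Finset.sum_subset (Finset.range_subset_range.mpr (by omega)) ?_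
    intro x _ hx
    have hx' : m < x := by simpa using hx
    rw [hs x hx']
    simp
  rw [tr, ts, ← hs2]
  linarith [HZ]
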